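/- Let H₁, …, Hₙ be finite-dimensional complex inner product spaces, let ψ be a unit vector in H₁⊗⋯⊗Hₙ, and let a₁, …, aₙ be unit vectors, aₖ ∈ Hₖ, such that the product state a₁⊗⋯⊗aₙ maximizes the overlap with ψ in each tensor slot separately: for every index k and every unit vector x ∈ Hₖ, replacing aₖ by x does not increase |⟨a₁⊗⋯⊗aₙ, ψ⟩|. Then for every index k and every vector b ∈ Hₖ with b ⊥ aₖ, the vector obtained from a₁⊗⋯⊗aₙ by replacing aₖ with b satisfies ⟨a₁⊗⋯⊗b⊗⋯⊗aₙ, ψ⟩ = 0. -/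

import Mathlib

open scoped ComplexInnerProductSpace

/-- The product state `a₁ ⊗ ⋯ ⊗ aₙ` of `n` parties with local dimensions `d k`, as a vector
in `H₁ ⊗ ⋯ ⊗ Hₙ ≃ ℂ^(Π k, d k)` with the standard inner product, so that
`⟪prodState a, prodState x⟫ = ∏ k, ⟪a k, x k⟫`. -/
noncomputable def prodState {n : ℕ} {d : Fin n → ℕ}
    (a : ∀ k, EuclideanSpace ℂ (Fin (d k))) :
    EuclideanSpace ℂ (∀ k, Fin (d k)) :=
  WithLp.toLp 2 (fun f => ∏ k, a k (f k))

lemma prodState_update_apply {n : ℕ} {d : Fin n → ℕ}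
    (a : ∀ k, EuclideanSpace ℂ (Fin (d k))) (k : Fin n)
    (x : EuclideanSpace ℂ (Fin (d k))) (f : ∀ k, Fin (d k)) :
    prodState (Function.update a k x) f
      = x (f k) * ∏ k' ∈ Finset.univ.erase k, a k' (f k') := by
  have h : (fun k' => (Function.update a k x k') (f k'))
      = Function.update (fun k' => a k' (f k')) k (x (f k)) := by
    funext k'
    rcases eq_or_ne k' k with rfl | h
    · simp
    · simp [Function.update_of_ne h]
  show (∏ k', (Function.update a k x k') (f k')) = _
  rw [h, Finset.prod_update_of_mem (Finset.mem_univ k)]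
  simp [Finset.erase_eq]

/-- **Proposition 1, multipartite version**: if the product state `a₁ ⊗ ⋯ ⊗ aₙ` maximizes the
overlap with the unit vector `ψ` in each tensor slot separately, then replacing any single
factor `aₖ` by a vector orthogonal to it yields a product vector orthogonal to `ψ`. -/
theorem prop1_multipartite (n : ℕ) (d : Fin n → ℕ)
    (ψ : EuclideanSpace ℂ (∀ k, Fin (d k))) (hψ : ‖ψ‖ = 1)
    (a : ∀ k, EuclideanSpace ℂ (Fin (d k))) (ha : ∀ k, ‖a k‖ = 1)
    (hmax : ∀ (k : Fin n) (x : EuclideanSpace ℂ (Fin (d k))), ‖x‖ = 1 →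
      ‖⟪prodState (Function.update a k x), ψ⟫‖ ≤ ‖⟪prodState a, ψ⟫‖) :
    ∀ (k : Fin n) (b : EuclideanSpace ℂ (Fin (d k))), ⟪b, a k⟫ = 0 →
      ⟪prodState (Function.update a k b), ψ⟫ = 0 := by
  intro k b hb
  set L : EuclideanSpace ℂ (Fin (d k)) → ℂ :=
    fun x => ⟪prodState (Function.update a k x), ψ⟫ with hLdef
  have hadd : ∀ x y : EuclideanSpace ℂ (Fin (d k)),
      prodState (Function.update a k (x + y))
        = prodState (Function.update a k x) + prodState (Function.update a k y) := by
    intro x y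
    ext f
    have : (prodState (Function.update a k x) + prodState (Function.update a k y)) f
        = prodState (Function.update a k x) f + prodState (Function.update a k y) f := rfl
    rw [this, prodState_update_apply, prodState_update_apply, prodState_update_apply]
    have hxy : (x + y) (f k) = x (f k) + y (f k) := rfl
    rw [hxy]; ring
  have hsmul : ∀ (s : ℂ) (x : EuclideanSpace ℂ (Fin (d k))),
      prodState (Function.update a k (s • x)) = s • prodState (Function.update a k x) := by
    intro s x
    ext f
    have : (s • prodState (Function.update a k x)) f
        = s * prodState (Function.update a k x) f := rfl
    rw [this, prodState_update_apply, prodState_update_apply]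
    have hsx : (s • x) (f k) = s * x (f k) := rfl
    rw [hsx]; ring
  have hLadd : ∀ x y, L (x + y) = L x + L y := by
    intro x y
    simp only [hLdef, hadd, inner_add_left]
  have hLsmul : ∀ (s : ℂ) x, L (s • x) = (starRingEnd ℂ) s * L x := by
    intro s x
    simp only [hLdef, hsmul, inner_smul_left]
  have hmax' : ∀ x : EuclideanSpace ℂ (Fin (d k)), ‖x‖ = 1 → ‖L x‖ ≤ ‖L (a k)‖ := by
    intro x hx
    have h := hmax k x hx
    have : Function.update a k (a k) = a := Function.update_eq_self k a
    simpa [hLdef, this] using h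
  set c : ℂ := L (a k) with hcdef
  have key : ∀ b : EuclideanSpace ℂ (Fin (d k)), ‖b‖ = 1 → ⟪b, a k⟫ = 0 → L b = 0 := by
    intro b hb1 hborth
    by_contra hβ
    set β : ℂ := L b with hβdef
    rcases eq_or_ne c 0 with hc | hc
    · have h := hmax' b hb1
      rw [hc, norm_zero] at h
      exact hβ (norm_le_zero_iff.mp h)
    · have hcn : 0 < ‖c‖ := norm_pos_iff.mpr hc
      have hβn : 0 < ‖β‖ := norm_pos_iff.mpr hβ
      set lam : ℝ := ‖β‖ ^ 2 / ‖c‖ ^ 2 with hlamdef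
      have hlam : 0 < lam := by positivity
      set s : ℂ := (starRingEnd ℂ) ((lam : ℂ) * c / β) with hsdef
      have hconjs : (starRingEnd ℂ) s = (lam : ℂ) * c / β := by
        rw [hsdef, Complex.conj_conj]
      have hsnorm : ‖s‖ = ‖β‖ / ‖c‖ := by
        rw [hsdef]
        rw [RCLike.norm_conj, norm_div, norm_mul, Complex.norm_real,
          Real.norm_eq_abs, abs_of_pos hlam, hlamdef]
        have hβa : ‖β‖ ≠ 0 := by simpa using hβn.ne'
        have hca : ‖c‖ ≠ 0 := by simpa using hcn.ne'
        field_simp [hβa, hca]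
      have horth' : ⟪a k, b⟫ = 0 := by
        rw [← inner_conj_symm, hborth, map_zero]
      set v : EuclideanSpace ℂ (Fin (d k)) := a k + s • b with hvdef
      have hv2 : ‖v‖ ^ 2 = 1 + lam := by
        rw [hvdef, norm_add_sq (𝕜 := ℂ)]
        have h1 : ⟪a k, s • b⟫ = 0 := by rw [inner_smul_right, horth', mul_zero]
        rw [h1, map_zero]
        rw [norm_smul, ha k, hb1, hsnorm]
        rw [hlamdef]
        field_simp
        ring
      have hvne : ‖v‖ ≠ 0 := by
        intro h
        rw [h] at hv2
        simp at hv2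
        linarith
      have hvpos : 0 < ‖v‖ := lt_of_le_of_ne (norm_nonneg v) (Ne.symm hvne)
      set x : EuclideanSpace ℂ (Fin (d k)) := ((‖v‖ : ℂ))⁻¹ • v with hxdef
      have hx1 : ‖x‖ = 1 := by
        rw [hxdef, norm_smul, norm_inv, Complex.norm_real, Real.norm_eq_abs,
          abs_of_pos hvpos]
        field_simp
      have hLv : L v = ((1 + lam : ℝ) : ℂ) * c := by
        rw [hvdef, hLadd, hLsmul, hconjs, ← hcdef, ← hβdef]
        have hβ0 : β ≠ 0 := hβ
        field_simp
        push_cast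
        ring
      have hLx : L x = ((‖v‖ : ℂ))⁻¹ * (((1 + lam : ℝ) : ℂ) * c) := by
        rw [hxdef, hLsmul, hLv, map_inv₀, Complex.conj_ofReal]
      have hineq := hmax' x hx1
      rw [hLx] at hineq
      rw [norm_mul, norm_mul, norm_inv, Complex.norm_real, Complex.norm_real,
        Real.norm_eq_abs, Real.norm_eq_abs,
        abs_of_pos hvpos, abs_of_pos (by linarith : (0:ℝ) < 1 + lam)] at hineq
      rw [inv_mul_le_iff₀ hvpos] at hineq
      have h2 : 1 + lam ≤ ‖v‖ := by
        nlinarith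
      have h3 : (1 + lam) ^ 2 ≤ ‖v‖ ^ 2 := by nlinarith
      rw [hv2] at h3
      nlinarith
  rcases eq_or_ne b 0 with rfl | hb0
  · have h0 : prodState (Function.update a k (0 : EuclideanSpace ℂ (Fin (d k)))) = 0 := by
      ext f
      rw [prodState_update_apply]
      show (0 : ℂ) * _ = (0 : EuclideanSpace ℂ (∀ k, Fin (d k))) f
      simp
    show L 0 = 0
    rw [hLdef]
    simp only [h0, inner_zero_left]
  · set b' : EuclideanSpace ℂ (Fin (d k)) := ((‖b‖ : ℂ))⁻¹ • b with hb'def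
    have hbn : (0:ℝ) < ‖b‖ := norm_pos_iff.mpr hb0
    have hb'1 : ‖b'‖ = 1 := by
      rw [hb'def, norm_smul, norm_inv, Complex.norm_real, Real.norm_eq_abs,
        abs_of_pos hbn]
      field_simp
    have hb'orth : ⟪b', a k⟫ = 0 := by
      rw [hb'def, inner_smul_left, hb, mul_zero]
    have hLb' := key b' hb'1 hb'orth
    have hrec : b = (‖b‖ : ℂ) • b' := by
      rw [hb'def, smul_smul]
      rw [mul_inv_cancel₀ (by exact_mod_cast hbn.ne' : ((‖b‖ : ℂ)) ≠ 0), one_smul]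
    show L b = 0
    rw [hrec, hLsmul, hLb', mul_zero]
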